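/- Define c̄_L(α,λ) := c_L(α) − λ sin(α+δ) and c̄_D(α,λ) := c_D(α) + λ cos(α+δ) for a function λ(α). Both c̄_L and c̄_D have zero derivative with respect to α (i.e., are constant) if and only if λ(α) = c_L'(α) cos(α+δ) + c_D'(α) sin(α+δ), λ'(α) = c_L'(α) sin(α+δ) − c_D'(α) cos(α+δ), which in turn is equivalent (assuming c_L, c_D twice differentiable) to the condition (c_D'' − 2c_L') sin(α+δ) + (c_L'' + 2c_D') cos(α+δ) = 0 for all α. -/

import Mathlib

open Real

/-- Lemma 2 i): the transformed coefficients `c̄_L, c̄_D` are constant iff `λ`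
and `λ'` are given by the stated formulas, which (for twice differentiable
`c_L, c_D`) is equivalent to `(c_D'' − 2c_L') sin(α+δ) + (c_L'' + 2c_D') cos(α+δ) = 0`. -/
theorem spherical_equivalency_condition
    (cL cD lam : ℝ → ℝ) (δ : ℝ)
    (hcL : ContDiff ℝ 2 cL) (hcD : ContDiff ℝ 2 cD)
    (hlam : Differentiable ℝ lam) :
    ((∀ α, deriv (fun β => cL β - lam β * sin (β + δ)) α = 0 ∧
           deriv (fun β => cD β + lam β * cos (β + δ)) α = 0) ↔
      (∀ α, lam α = deriv cL α * cos (α + δ) + deriv cD α * sin (α + δ) ∧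
            deriv lam α = deriv cL α * sin (α + δ) - deriv cD α * cos (α + δ))) ∧
    ((∀ α, lam α = deriv cL α * cos (α + δ) + deriv cD α * sin (α + δ) ∧
           deriv lam α = deriv cL α * sin (α + δ) - deriv cD α * cos (α + δ)) ↔
      ((∀ α, lam α = deriv cL α * cos (α + δ) + deriv cD α * sin (α + δ)) ∧
       (∀ α, (deriv (deriv cD) α - 2 * deriv cL α) * sin (α + δ)
           + (deriv (deriv cL) α + 2 * deriv cD α) * cos (α + δ) = 0))) := by
  -- basic differentiability
  have hcL2 : ContDiff ℝ ((1:WithTop ℕ∞) + 1) cL := by norm_num at hcL ⊢; exact hcL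
  have hcD2 : ContDiff ℝ ((1:WithTop ℕ∞) + 1) cD := by norm_num at hcD ⊢; exact hcD
  have hcL0 : Differentiable ℝ cL := (contDiff_succ_iff_deriv.mp hcL2).1
  have hcD0 : Differentiable ℝ cD := (contDiff_succ_iff_deriv.mp hcD2).1
  have hcL1 : Differentiable ℝ (deriv cL) :=
    ((contDiff_succ_iff_deriv.mp hcL2).2.2).differentiable one_ne_zero
  have hcD1 : Differentiable ℝ (deriv cD) :=
    ((contDiff_succ_iff_deriv.mp hcD2).2.2).differentiable one_ne_zero
  -- derivative of sin/cos shifted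
  have hsin : ∀ α : ℝ, HasDerivAt (fun β : ℝ => sin (β + δ)) (cos (α + δ)) α := by
    intro α
    simpa using ((hasDerivAt_id α).add_const δ).sin
  have hcos : ∀ α : ℝ, HasDerivAt (fun β : ℝ => cos (β + δ)) (-sin (α + δ)) α := by
    intro α
    simpa using ((hasDerivAt_id α).add_const δ).cos
  -- derivatives of transformed coefficients
  have hdL : ∀ α, deriv (fun β => cL β - lam β * sin (β + δ)) α =
      deriv cL α - (deriv lam α * sin (α + δ) + lam α * cos (α + δ)) := by
    intro α
    exact (((hcL0 α).hasDerivAt.sub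
      (((hlam α).hasDerivAt.mul (hsin α)))).deriv)
  have hdD : ∀ α, deriv (fun β => cD β + lam β * cos (β + δ)) α =
      deriv cD α + (deriv lam α * cos (α + δ) + lam α * (-sin (α + δ))) := by
    intro α
    exact (((hcD0 α).hasDerivAt.add
      (((hlam α).hasDerivAt.mul (hcos α)))).deriv)
  -- derivative of the formula F α = cL' cos + cD' sin, when lam = F
  have hFderiv : ∀ (h : ∀ α, lam α = deriv cL α * cos (α + δ) + deriv cD α * sin (α + δ)),
      ∀ α, deriv lam α = deriv (deriv cL) α * cos (α + δ) - deriv cL α * sin (α + δ)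
        + deriv (deriv cD) α * sin (α + δ) + deriv cD α * cos (α + δ) := by
    intro h α
    have hlamF : lam = fun β => deriv cL β * cos (β + δ) + deriv cD β * sin (β + δ) :=
      funext h
    have hF : HasDerivAt (fun β => deriv cL β * cos (β + δ) + deriv cD β * sin (β + δ))
        (deriv (deriv cL) α * cos (α + δ) + deriv cL α * (-sin (α + δ))
          + (deriv (deriv cD) α * sin (α + δ) + deriv cD α * cos (α + δ))) α :=
      ((hcL1 α).hasDerivAt.mul (hcos α)).add ((hcD1 α).hasDerivAt.mul (hsin α))
    rw [hlamF, hF.deriv]; ring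
  constructor
  · constructor
    · intro h α
      obtain ⟨h1, h2⟩ := h α
      rw [hdL α] at h1; rw [hdD α] at h2
      have P := sin_sq_add_cos_sq (α + δ)
      constructor
      · linear_combination (-(cos (α+δ))) * h1 - sin (α+δ) * h2 - lam α * P
      · linear_combination (-(sin (α+δ))) * h1 + cos (α+δ) * h2 - deriv lam α * P
    · intro h α
      obtain ⟨hA, hB⟩ := h α
      have P := sin_sq_add_cos_sq (α + δ)
      constructor
      · rw [hdL α]
        linear_combination (-(sin (α+δ))) * hB - cos (α+δ) * hA - deriv cL α * P
      · rw [hdD α]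
        linear_combination cos (α+δ) * hB - sin (α+δ) * hA - deriv cD α * P
  · constructor
    · intro h
      have hA : ∀ α, lam α = deriv cL α * cos (α + δ) + deriv cD α * sin (α + δ) :=
        fun α => (h α).1
      refine ⟨hA, fun α => ?_⟩
      have h1 := hFderiv hA α
      have h2 := (h α).2
      linarith [h1, h2]
    · intro ⟨hA, hC⟩ α
      refine ⟨hA α, ?_⟩
      have h1 := hFderiv hA α
      have h2 := hC α
      linarith [h1, h2]
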